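/- Let R be a commutative ring and x ∈ R. Define the third-order Pell polynomial sequence r : ℕ → R by r 0 = 0, r 1 = 1, r 2 = 2x, and r n = 2x·r(n-1) + r(n-3) for n ≥ 3. Then for every n ≥ 1, r n = ∑_{ℓ=0}^{⌊(n-1)/3⌋} binomial(n-1-2ℓ, ℓ) · (2x)^{n-1-3ℓ}. -/
import Mathlib

private lemma pell3_term_id {R : Type*} [CommRing R] (y : R) (m ℓ : ℕ) :
    ((m + 1 - 2 * ℓ).choose (ℓ + 1) : R) * y ^ (m - 3 * ℓ)
      = y * (((m - 2 * ℓ).choose (ℓ + 1) : R) * y ^ (m - 1 - 3 * ℓ))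
        + ((m - 2 * ℓ).choose ℓ : R) * y ^ (m - 3 * ℓ) := by
  rcases lt_or_ge (3 * ℓ) m with h | h
  · have h1 : m + 1 - 2 * ℓ = (m - 2 * ℓ) + 1 := by omega
    have h2 : m - 3 * ℓ = (m - 1 - 3 * ℓ) + 1 := by omega
    rw [h1, h2, Nat.choose_succ_succ]
    push_cast
    ring
  · have hz : (m - 2 * ℓ).choose (ℓ + 1) = 0 :=
      Nat.choose_eq_zero_of_lt (by omega)
    rcases eq_or_lt_of_le h with heq | hlt
    · have e1 : m + 1 - 2 * ℓ = ℓ + 1 := by omega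
      have e2 : m - 2 * ℓ = ℓ := by omega
      rw [e1, e2, Nat.choose_self, Nat.choose_self, Nat.choose_succ_self]
      push_cast
      ring
    · have hz1 : (m + 1 - 2 * ℓ).choose (ℓ + 1) = 0 :=
        Nat.choose_eq_zero_of_lt (by omega)
      have hz2 : (m - 2 * ℓ).choose ℓ = 0 :=
        Nat.choose_eq_zero_of_lt (by omega)
      rw [hz, hz1, hz2]
      push_cast
      ring

private lemma pell3_aux {R : Type*} [CommRing R] (x : R) (r : ℕ → R)
    (h0 : r 0 = 0) (h1 : r 1 = 1) (h2 : r 2 = 2 * x)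
    (hrec : ∀ n, 3 ≤ n → r n = 2 * x * r (n - 1) + r (n - 3)) :
    ∀ n, r (n + 1) = ∑ ℓ ∈ Finset.range (n + 1),
      (Nat.choose (n - 2 * ℓ) ℓ : R) * (2 * x) ^ (n - 3 * ℓ) := by
  intro n
  induction n using Nat.strong_induction_on with
  | _ n ih =>
    match n with
    | 0 => simp [h1]
    | 1 =>
      rw [h2]
      rw [Finset.sum_range_succ, Finset.sum_range_succ, Finset.sum_range_zero]
      norm_num
    | 2 =>
      have := hrec 3 (by norm_num)
      norm_num at this
      rw [this, h2, h0]
      rw [Finset.sum_range_succ, Finset.sum_range_succ, Finset.sum_range_succ,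
        Finset.sum_range_zero]
      norm_num
      ring
    | (m + 3) =>
      have hr : r (m + 4) = 2 * x * r (m + 3) + r (m + 1) := by
        have := hrec (m + 4) (by omega)
        norm_num at this
        convert this using 3 <;> first | omega | rfl
      rw [show m + 3 + 1 = m + 4 from rfl, hr, ih (m + 2) (by omega), ih m (by omega)]
      set y := 2 * x with hy
      -- pad the last sum from range (m+1) to range (m+3)
      have pad1 : ∑ ℓ ∈ Finset.range (m + 1),
            (Nat.choose (m - 2 * ℓ) ℓ : R) * y ^ (m - 3 * ℓ)
          = ∑ ℓ ∈ Finset.range (m + 3),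
            (Nat.choose (m - 2 * ℓ) ℓ : R) * y ^ (m - 3 * ℓ) := by
        apply Finset.sum_subset
        · intro a ha
          simp only [Finset.mem_range] at *
          omega
        · intro a ha ha'
          simp only [Finset.mem_range] at *
          have : (m - 2 * a).choose a = 0 := Nat.choose_eq_zero_of_lt (by omega)
          rw [this]
          simp
      rw [pad1]
      rw [Finset.sum_range_succ' _ (m + 3), Finset.sum_range_succ' _ (m + 2)]
      -- pad the middle sum from range (m+2) to range (m+3)
      have pad2 : ∑ ℓ ∈ Finset.range (m + 2),
            (Nat.choose (m + 2 - 2 * (ℓ + 1)) (ℓ + 1) : R) * y ^ (m + 2 - 3 * (ℓ + 1))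
          = ∑ ℓ ∈ Finset.range (m + 3),
            (Nat.choose (m + 2 - 2 * (ℓ + 1)) (ℓ + 1) : R) * y ^ (m + 2 - 3 * (ℓ + 1)) := by
        apply Finset.sum_subset
        · intro a ha
          simp only [Finset.mem_range] at *
          omega
        · intro a ha ha'
          simp only [Finset.mem_range] at *
          have : (m + 2 - 2 * (a + 1)).choose (a + 1) = 0 :=
            Nat.choose_eq_zero_of_lt (by omega)
          rw [this]
          simp
      rw [pad2]
      have key : ∑ ℓ ∈ Finset.range (m + 3),
            (Nat.choose (m + 3 - 2 * (ℓ + 1)) (ℓ + 1) : R) * y ^ (m + 3 - 3 * (ℓ + 1))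
          = ∑ ℓ ∈ Finset.range (m + 3),
            (y * ((Nat.choose (m + 2 - 2 * (ℓ + 1)) (ℓ + 1) : R) * y ^ (m + 2 - 3 * (ℓ + 1)))
              + (Nat.choose (m - 2 * ℓ) ℓ : R) * y ^ (m - 3 * ℓ)) := by
        apply Finset.sum_congr rfl
        intro ℓ _
        have e1 : m + 3 - 2 * (ℓ + 1) = m + 1 - 2 * ℓ := by omega
        have e2 : m + 3 - 3 * (ℓ + 1) = m - 3 * ℓ := by omega
        have e3 : m + 2 - 2 * (ℓ + 1) = m - 2 * ℓ := by omega
        have e4 : m + 2 - 3 * (ℓ + 1) = m - 1 - 3 * ℓ := by omega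
        rw [e1, e2, e3, e4]
        exact pell3_term_id y m ℓ
      rw [key, Finset.sum_add_distrib, mul_add, Finset.mul_sum]
      have e0 : (Nat.choose (m + 3 - 2 * 0) 0 : R) * y ^ (m + 3 - 3 * 0)
          = y * ((Nat.choose (m + 2 - 2 * 0) 0 : R) * y ^ (m + 2 - 3 * 0)) := by
        norm_num
        ring
      rw [e0]
      ring

theorem third_order_pell_explicit_formula
    (R : Type*) [CommRing R] (x : R) (r : ℕ → R)
    (h0 : r 0 = 0) (h1 : r 1 = 1) (h2 : r 2 = 2 * x)
    (hrec : ∀ n, 3 ≤ n → r n = 2 * x * r (n - 1) + r (n - 3)) :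
    ∀ n, 1 ≤ n →
      r n = ∑ ℓ ∈ Finset.range ((n - 1) / 3 + 1),
        (Nat.choose (n - 1 - 2 * ℓ) ℓ : R) * (2 * x) ^ (n - 1 - 3 * ℓ) := by
  intro n hn
  obtain ⟨m, rfl⟩ : ∃ m, n = m + 1 := ⟨n - 1, by omega⟩
  have := pell3_aux x r h0 h1 h2 hrec m
  rw [this]
  simp only [Nat.add_sub_cancel]
  symm
  apply Finset.sum_subset
  · intro a ha
    simp only [Finset.mem_range] at *
    omega
  · intro a ha ha'
    simp only [Finset.mem_range] at *
    have : (m - 2 * a).choose a = 0 := Nat.choose_eq_zero_of_lt (by omega)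
    rw [this]
    simp
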